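/- (Alperin–Peterson) Let Γ be a finite abelian group and S ⊆ Γ with S = −S. The Cayley graph Cay(Γ,S) is integral if and only if S belongs to the Boolean algebra B(Γ) generated by the subgroups of Γ. -/

import Mathlib

open Pointwise

/-- The Boolean algebra of subsets of `Γ` generated by the subgroups of `Γ`. -/
inductive InB (Γ : Type*) [AddGroup Γ] : Set Γ → Prop
  | subgroup (H : AddSubgroup Γ) : InB Γ (H : Set Γ)
  | compl {S : Set Γ} : InB Γ S → InB Γ Sᶜ
  | union {S T : Set Γ} : InB Γ S → InB Γ T → InB Γ (S ∪ T)

/-- `Atom a` is the set of elements generating the same cyclic subgroup as `a`. -/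
def Atom {Γ : Type*} [AddGroup Γ] (a : Γ) : Set Γ :=
  {b | AddSubgroup.zmultiples a = AddSubgroup.zmultiples b}

open scoped Classical
set_option linter.unusedSectionVars false
set_option linter.unnecessarySimpa false
set_option maxHeartbeats 1000000

namespace AP

variable {Γ : Type*} [AddCommGroup Γ] [Fintype Γ]


variable {Γ : Type*} [AddCommGroup Γ] [Fintype Γ]

lemma mem_atom_iff {a b : Γ} : b ∈ Atom a ↔ AddSubgroup.zmultiples a = AddSubgroup.zmultiples b :=
  Iff.rfl

def AtomClosed (S : Set Γ) : Prop := ∀ ⦃a⦄, a ∈ S → Atom a ⊆ S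

lemma inB_empty : InB Γ (∅ : Set Γ) := by
  have h := (InB.subgroup (⊤ : AddSubgroup Γ)).compl
  simpa using h

lemma inB_inter {S T : Set Γ} (hS : InB Γ S) (hT : InB Γ T) : InB Γ (S ∩ T) := by
  have h := (hS.compl.union hT.compl).compl
  rwa [Set.compl_union, compl_compl, compl_compl] at h

lemma inB_biUnion {ι : Type*} (t : Finset ι) {f : ι → Set Γ} (h : ∀ i ∈ t, InB Γ (f i)) :
    InB Γ (⋃ i ∈ t, f i) := by
  classical
  induction t using Finset.induction_on with
  | empty => simpa using inB_empty
  | @insert a s ha ih =>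
    rw [Finset.set_biUnion_insert]
    exact (h a (Finset.mem_insert_self a s)).union
      (ih fun i hi => h i (Finset.mem_insert_of_mem hi))

lemma atom_eq_diff (a : Γ) :
    Atom a = (AddSubgroup.zmultiples a : Set Γ) \
      ⋃ c ∈ Finset.univ.filter (fun c : Γ =>
        c ∈ AddSubgroup.zmultiples a ∧ a ∉ AddSubgroup.zmultiples c),
        (AddSubgroup.zmultiples c : Set Γ) := by
  ext b
  constructor
  · intro hb
    have hb' : AddSubgroup.zmultiples a = AddSubgroup.zmultiples b := hb
    constructor
    · exact SetLike.mem_coe.2 (hb' ▸ AddSubgroup.mem_zmultiples b)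
    · intro hmem
      rw [Set.mem_iUnion₂] at hmem
      obtain ⟨c, hc, hbc⟩ := hmem
      rw [Finset.mem_filter] at hc
      obtain ⟨-, hc1, hc2⟩ := hc
      apply hc2
      have h1 : AddSubgroup.zmultiples b ≤ AddSubgroup.zmultiples c :=
        AddSubgroup.zmultiples_le.2 (SetLike.mem_coe.1 hbc)
      rw [← hb'] at h1
      exact h1 (AddSubgroup.mem_zmultiples a)
  · rintro ⟨hba, hnot⟩
    by_cases hab : a ∈ AddSubgroup.zmultiples b
    · exact le_antisymm (AddSubgroup.zmultiples_le.2 hab)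
        (AddSubgroup.zmultiples_le.2 (SetLike.mem_coe.1 hba))
    · exact absurd (Set.mem_iUnion₂.2 ⟨b, Finset.mem_filter.2
        ⟨Finset.mem_univ b, SetLike.mem_coe.1 hba, hab⟩,
        SetLike.mem_coe.2 (AddSubgroup.mem_zmultiples b)⟩) hnot

lemma inB_atom (a : Γ) : InB Γ (Atom a) := by
  rw [atom_eq_diff, Set.diff_eq]
  exact inB_inter (InB.subgroup _)
    (inB_biUnion _ fun c _ => InB.subgroup (AddSubgroup.zmultiples c)).compl

lemma AtomClosed.inB {S : Set Γ} (h : AtomClosed S) : InB Γ S := by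
  have hS : S = ⋃ a ∈ S.toFinset, Atom a := by
    ext b
    simp only [Set.mem_iUnion, Set.mem_toFinset]
    exact ⟨fun hb => ⟨b, hb, rfl⟩, fun ⟨a, ha, hb⟩ => h ha hb⟩
  rw [hS]
  exact inB_biUnion _ fun a _ => inB_atom a

lemma atomClosed_of_inB {S : Set Γ} (h : InB Γ S) : AtomClosed S := by
  induction h with
  | subgroup H =>
    intro a ha b hb
    rw [mem_atom_iff] at hb
    have h1 : b ∈ AddSubgroup.zmultiples a := hb ▸ AddSubgroup.mem_zmultiples b
    exact AddSubgroup.zmultiples_le.2 ha h1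
  | compl h ih =>
    intro a ha b hb hbS
    exact ha (ih hbS (mem_atom_iff.2 (mem_atom_iff.1 hb).symm))
  | union h1 h2 ih1 ih2 =>
    intro a ha b hb
    rcases ha with ha | ha
    · exact Or.inl (ih1 ha hb)
    · exact Or.inr (ih2 ha hb)


lemma nsmul_injective {k : ℕ} (hk : k.Coprime (AddMonoid.exponent Γ)) :
    Function.Injective (fun a : Γ => k • a) := by
  intro a b hab
  simp only at hab
  have h0 : k • (a - b) = 0 := by rw [smul_sub, hab, sub_self]
  have hd : addOrderOf (a - b) ∣ k := addOrderOf_dvd_of_nsmul_eq_zero h0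
  have hd2 : addOrderOf (a - b) ∣ AddMonoid.exponent Γ := AddMonoid.addOrder_dvd_exponent _
  have h1 : addOrderOf (a - b) ∣ 1 := hk ▸ Nat.dvd_gcd hd hd2
  have h2 : a - b = 0 := AddMonoid.addOrderOf_eq_one_iff.1 (Nat.dvd_one.1 h1)
  exact sub_eq_zero.1 h2

lemma exists_zsmul_nsmul_eq {k : ℕ} (a : Γ) (h : k.Coprime (addOrderOf a)) :
    ∃ x : ℤ, x • (k • a) = a := by
  set d := addOrderOf a
  refine ⟨Nat.gcdA k d, ?_⟩
  have hb' : (1 : ℤ) = (k : ℤ) * Nat.gcdA k d + (d : ℤ) * Nat.gcdB k d := by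
    rw [← Nat.cast_one, ← h]
    exact_mod_cast Nat.gcd_eq_gcd_ab k d
  have h3 : d • a = 0 := addOrderOf_nsmul_eq_zero a
  have h2 : ((d : ℤ) * Nat.gcdB k d) • a = 0 := by
    rw [mul_comm, mul_smul, natCast_zsmul, h3, smul_zero]
  calc Nat.gcdA k d • (k • a) = Nat.gcdA k d • ((k : ℤ) • a) := by rw [natCast_zsmul]
    _ = ((k : ℤ) * Nat.gcdA k d) • a := by rw [← mul_smul, mul_comm]
    _ = ((k : ℤ) * Nat.gcdA k d) • a + ((d : ℤ) * Nat.gcdB k d) • a := by rw [h2, add_zero]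
    _ = ((k : ℤ) * Nat.gcdA k d + (d : ℤ) * Nat.gcdB k d) • a := (add_smul _ _ a).symm
    _ = (1 : ℤ) • a := by rw [← hb']
    _ = a := one_zsmul a

lemma atom_of_coprime_smul {k : ℕ} (hk : k.Coprime (AddMonoid.exponent Γ)) (a : Γ) :
    k • a ∈ Atom a := by
  have hka : k.Coprime (addOrderOf a) :=
    Nat.Coprime.coprime_dvd_right (AddMonoid.addOrder_dvd_exponent a) hk
  obtain ⟨x, hx⟩ := exists_zsmul_nsmul_eq a hka
  have heq : AddSubgroup.zmultiples a = AddSubgroup.zmultiples (k • a) := by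
    refine le_antisymm (AddSubgroup.zmultiples_le.2 ?_) (AddSubgroup.zmultiples_le.2 ?_)
    · nth_rewrite 2 [← hx]
      exact AddSubgroup.zsmul_mem _ (AddSubgroup.mem_zmultiples (k • a)) x
    · rw [← natCast_zsmul]
      exact AddSubgroup.zsmul_mem _ (AddSubgroup.mem_zmultiples a) _
  exact heq

lemma atomClosed_of_smul_stable {S : Set Γ}
    (h : ∀ k : ℕ, k.Coprime (AddMonoid.exponent Γ) → ∀ a ∈ S, k • a ∈ S) :
    ∀ ⦃a⦄, a ∈ S → Atom a ⊆ S := by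
  intro a ha b hb
  have hb' : AddSubgroup.zmultiples a = AddSubgroup.zmultiples b := hb
  haveI : NeZero (AddMonoid.exponent Γ) := ⟨AddMonoid.exponent_ne_zero_of_finite⟩
  set n := AddMonoid.exponent Γ with hn
  set d := addOrderOf a with hdd
  have hd0 : 0 < d := addOrderOf_pos a
  -- b = z • a
  obtain ⟨z, hz⟩ := AddSubgroup.mem_zmultiples_iff.1 (hb' ▸ AddSubgroup.mem_zmultiples b)
  -- m = z mod d
  set m : ℕ := (z % (d : ℤ)).toNat with hm
  have hz' : (m : ℤ) = z % (d : ℤ) := Int.toNat_of_nonneg (Int.emod_nonneg z (by exact_mod_cast hd0.ne'))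
  have hma : m • a = b := by
    rw [← natCast_zsmul, hz', ← hz]
    conv_rhs => rw [← Int.emod_add_mul_ediv z (d : ℤ)]
    have h3 : d • a = 0 := addOrderOf_nsmul_eq_zero a
    rw [add_smul, mul_comm, mul_smul, natCast_zsmul, h3, smul_zero, add_zero]
  -- coprimality of m and d
  obtain ⟨w, hw⟩ := AddSubgroup.mem_zmultiples_iff.1 (hb'.symm ▸ AddSubgroup.mem_zmultiples a)
  have hwm : (w * m) • a = a := by rw [mul_smul, natCast_zsmul, hma, hw]
  have hdvd : (d : ℤ) ∣ w * m - 1 := by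
    rw [addOrderOf_dvd_iff_zsmul_eq_zero]
    rw [sub_smul, hwm, one_zsmul, sub_self]
  have hcop : Nat.Coprime m d := by
    have hg1 : ((Nat.gcd m d : ℕ) : ℤ) ∣ 1 := by
      have hgm : ((Nat.gcd m d : ℕ) : ℤ) ∣ (w * m) := Dvd.dvd.mul_left (by exact_mod_cast Nat.gcd_dvd_left m d) w
      have hgd : ((Nat.gcd m d : ℕ) : ℤ) ∣ w * m - 1 :=
        dvd_trans (by exact_mod_cast Nat.gcd_dvd_right m d) hdvd
      have := dvd_sub hgm hgd
      simpa using this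
    exact Nat.dvd_one.1 (by exact_mod_cast hg1)
  haveI : NeZero d := ⟨hd0.ne'⟩
  -- lift to a unit mod n
  have hdn : d ∣ n := AddMonoid.addOrder_dvd_exponent a
  obtain ⟨U, hU⟩ := ZMod.unitsMap_surjective hdn (ZMod.unitOfCoprime m hcop)
  set k : ℕ := (U : ZMod n).val with hk
  have hkcop : k.Coprime n := ZMod.val_coe_unit_coprime U
  have hkm : (k : ZMod d) = (m : ZMod d) := by
    have h1 : ((ZMod.unitsMap hdn U : (ZMod d)ˣ) : ZMod d) = (m : ZMod d) := by
      rw [hU, ZMod.coe_unitOfCoprime]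
    rw [ZMod.unitsMap_def] at h1
    rw [ZMod.natCast_val]
    simpa using h1
  have hmod : k % d = m % d := (ZMod.natCast_eq_natCast_iff _ _ _).1 hkm
  have hka : k • a = b := by
    calc k • a = (k % d) • a := (mod_addOrderOf_nsmul a k).symm
      _ = (m % d) • a := by rw [hmod]
      _ = m • a := mod_addOrderOf_nsmul a m
      _ = b := hma
  exact hka ▸ h k hkcop a ha


lemma mulVec_char (S : Set Γ) (hsym : -S = S) (χ : AddChar Γ ℂ) :
    (Matrix.of fun a b : Γ => if a - b ∈ S then (1 : ℂ) else 0).mulVec ⇑χ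
      = (∑ s ∈ S.toFinset, χ s) • ⇑χ := by
  have hneg : ∀ s : Γ, -s ∈ S ↔ s ∈ S := fun s => by
    constructor
    · intro h
      have h2 : -s ∈ -S := hsym.symm ▸ h
      simpa [Set.mem_neg] using h2
    · intro h
      rw [← hsym]
      simpa [Set.mem_neg] using h
  funext a
  have h2 : Finset.univ.filter (fun s : Γ => s ∈ S) = S.toFinset := by ext s; simp
  have step1 : (Matrix.of fun a b : Γ => if a - b ∈ S then (1 : ℂ) else 0).mulVec ⇑χ a
      = ∑ b : Γ, (if a - b ∈ S then (1 : ℂ) else 0) * χ b := by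
    simp [Matrix.mulVec, dotProduct]
  rw [step1]
  calc ∑ b : Γ, (if a - b ∈ S then (1 : ℂ) else 0) * χ b
      = ∑ s : Γ, (if s ∈ S then (1 : ℂ) else 0) * χ (a - s) := by
        refine Fintype.sum_equiv (Equiv.subLeft a) _ _ fun x => ?_
        simp only [Equiv.subLeft_apply, sub_sub_cancel]
    _ = ∑ s : Γ, (if s ∈ S then χ (a - s) else 0) := by
        refine Finset.sum_congr rfl fun s _ => ?_
        split <;> simp
    _ = ∑ s ∈ S.toFinset, χ (a - s) := by rw [← Finset.sum_filter, h2]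
    _ = ∑ s ∈ S.toFinset, χ a * χ (-s) := by
        refine Finset.sum_congr rfl fun s _ => ?_
        rw [sub_eq_add_neg, AddChar.map_add_eq_mul]
    _ = χ a * ∑ s ∈ S.toFinset, χ (-s) := by rw [Finset.mul_sum]
    _ = χ a * ∑ s ∈ S.toFinset, χ s := by
        congr 1
        refine Finset.sum_nbij' (fun s => -s) (fun s => -s) ?_ ?_ ?_ ?_ ?_
        · intro s hs; rw [Set.mem_toFinset] at *; exact (hneg s).2 hs
        · intro s hs; rw [Set.mem_toFinset] at *; exact (hneg s).2 hs
        · intro s _; simp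
        · intro s _; simp
        · intro s _; rfl
    _ = ((∑ s ∈ S.toFinset, χ s) • ⇑χ) a := by
        rw [Pi.smul_apply, smul_eq_mul, mul_comm]

lemma char_ne_zero (χ : AddChar Γ ℂ) : (⇑χ : Γ → ℂ) ≠ 0 := fun h => by
  have h0 := congr_fun h 0
  rw [AddChar.map_zero_eq_one] at h0
  exact (one_ne_zero : (1 : ℂ) ≠ 0) (by simpa using h0)

lemma spectrum_eq (S : Set Γ) (hsym : -S = S) :
    spectrum ℂ (Matrix.of fun a b : Γ => if a - b ∈ S then (1 : ℂ) else 0)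
      = Set.range (fun χ : AddChar Γ ℂ => ∑ s ∈ S.toFinset, χ s) := by
  set A := Matrix.of fun a b : Γ => if a - b ∈ S then (1 : ℂ) else 0 with hA
  have hsp : spectrum ℂ A = spectrum ℂ (Matrix.toLin' A) :=
    (AlgEquiv.spectrum_eq Matrix.toLinAlgEquiv' A).symm
  have heig : ∀ χ : AddChar Γ ℂ,
      Matrix.toLin' A ⇑χ = (∑ s ∈ S.toFinset, χ s) • ⇑χ := fun χ => by
    rw [Matrix.toLin'_apply, mulVec_char S hsym χ]
  ext μ
  rw [hsp, ← Module.End.hasEigenvalue_iff_mem_spectrum]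
  constructor
  · intro hμ
    obtain ⟨v, hv⟩ := hμ.exists_hasEigenvector
    set b := AddChar.complexBasis Γ with hb
    have hv1 : Matrix.toLin' A v = μ • v := hv.apply_eq_smul
    have hrepr : (∑ χ : AddChar Γ ℂ, b.repr v χ • b χ) = v := b.sum_repr v
    have h2 : Matrix.toLin' A (∑ χ : AddChar Γ ℂ, b.repr v χ • b χ)
        = μ • ∑ χ : AddChar Γ ℂ, b.repr v χ • b χ := by rw [hrepr]; exact hv1
    rw [map_sum] at h2
    have heig' : ∀ χ : AddChar Γ ℂ,
        Matrix.toLin' A (b χ) = (∑ s ∈ S.toFinset, χ s) • b χ := fun χ => by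
      have hbe : b χ = ⇑χ := AddChar.complexBasis_apply χ
      rw [hbe]; exact heig χ
    simp_rw [map_smul, heig', smul_smul] at h2
    rw [Finset.smul_sum] at h2
    simp_rw [smul_smul] at h2
    have h4 : (fun χ : AddChar Γ ℂ => b.repr v χ * ∑ s ∈ S.toFinset, χ s)
        = (fun χ : AddChar Γ ℂ => μ * b.repr v χ) :=
      calc (fun χ : AddChar Γ ℂ => b.repr v χ * ∑ s ∈ S.toFinset, χ s)
          = ⇑(b.repr (∑ χ : AddChar Γ ℂ, (b.repr v χ * ∑ s ∈ S.toFinset, χ s) • b χ)) :=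
            (b.repr_sum_self _).symm
        _ = ⇑(b.repr (∑ χ : AddChar Γ ℂ, (μ * b.repr v χ) • b χ)) := by rw [h2]
        _ = (fun χ : AddChar Γ ℂ => μ * b.repr v χ) := b.repr_sum_self _
    have h5 : ∃ χ : AddChar Γ ℂ, b.repr v χ ≠ 0 := by
      by_contra hc
      push_neg at hc
      exact hv.right (b.repr.injective (by
        rw [map_zero]
        exact DFunLike.ext _ _ hc))
    obtain ⟨χ, hχ⟩ := h5
    have h6 : b.repr v χ * (∑ s ∈ S.toFinset, χ s) = μ * b.repr v χ := congr_fun h4 χ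
    refine ⟨χ, ?_⟩
    have h7 : b.repr v χ * (∑ s ∈ S.toFinset, χ s) = b.repr v χ * μ := by
      rw [h6, mul_comm]
    exact mul_left_cancel₀ hχ h7
  · rintro ⟨χ, rfl⟩
    exact Module.End.hasEigenvalue_of_hasEigenvector
      ⟨Module.End.mem_eigenspace_iff.2 (heig χ), char_ne_zero χ⟩



lemma sum_pow_eq_of_sum_eq_int {n : ℕ} (hn : n ≠ 0) {ι : Type*} (T : Finset ι) (f : ι → ℂ)
    (hf : ∀ s ∈ T, f s ^ n = 1) {m : ℤ} (hm : ∑ s ∈ T, f s = (m : ℂ)) {k : ℕ}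
    (hk : k.Coprime n) : ∑ s ∈ T, f s ^ k = (m : ℂ) := by
  haveI : NeZero n := ⟨hn⟩
  have hpos : 0 < n := Nat.pos_of_ne_zero hn
  set n' : ℕ+ := ⟨n, hpos⟩ with hn'
  haveI : NeZero (n' : ℕ) := ⟨n'.ne_zero⟩
  set K := CyclotomicField n' ℚ with hK
  haveI : NeZero ((n' : ℕ) : ℚ) := ⟨by exact_mod_cast n'.ne_zero⟩
  haveI : IsCyclotomicExtension {(n' : ℕ)} ℚ K :=
    CyclotomicField.isCyclotomicExtension (n := (n' : ℕ)) (K := ℚ)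
  have hζK : IsPrimitiveRoot (IsCyclotomicExtension.zeta n' ℚ K) (n' : ℕ) :=
    IsCyclotomicExtension.zeta_spec n' ℚ K
  set ζK := IsCyclotomicExtension.zeta n' ℚ K with hzK
  set ζC := Complex.exp (2 * Real.pi * Complex.I / n) with hzC
  have hζC : IsPrimitiveRoot ζC n := Complex.isPrimitiveRoot_exp n hn
  have hirr : Irreducible (Polynomial.cyclotomic n' ℚ) := Polynomial.cyclotomic.irreducible_rat n'.pos
  set e := hζK.embeddingsEquivPrimitiveRoots ℂ hirr with he
  -- first embedding: ζK ↦ ζC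
  have hprim1 : ζC ∈ primitiveRoots (n' : ℕ) ℂ := (mem_primitiveRoots hpos).2 hζC
  set σ1 : K →ₐ[ℚ] ℂ := e.symm ⟨ζC, hprim1⟩ with hσ1def
  have hσ1 : σ1 ζK = ζC := by
    have h := hζK.embeddingsEquivPrimitiveRoots_apply_coe ℂ hirr (e.symm ⟨ζC, hprim1⟩)
    rw [← he, Equiv.apply_symm_apply] at h
    exact h.symm
  -- choose exponents
  have hex : ∀ s ∈ T, ∃ i : ℕ, ζC ^ i = f s := fun s hs => by
    obtain ⟨i, _, hi⟩ := hζC.eq_pow_of_pow_eq_one (hf s hs)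
    exact ⟨i, hi⟩
  choose! i hi using hex
  set x : K := ∑ s ∈ T, ζK ^ i s with hx
  have hσ1x : σ1 x = (m : ℂ) := by
    rw [hx, map_sum, ← hm]
    exact Finset.sum_congr rfl fun s hs => by rw [map_pow, hσ1, hi s hs]
  have hinj : Function.Injective σ1 := σ1.toRingHom.injective
  have hxm : x = (m : K) := hinj (by rw [hσ1x, map_intCast])
  -- second embedding: ζK ↦ ζC ^ k
  have hprimk : ζC ^ k ∈ primitiveRoots (n' : ℕ) ℂ :=
    (mem_primitiveRoots hpos).2 (hζC.pow_of_coprime k hk)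
  set σk : K →ₐ[ℚ] ℂ := e.symm ⟨ζC ^ k, hprimk⟩ with hσkdef
  have hσk : σk ζK = ζC ^ k := by
    have h := hζK.embeddingsEquivPrimitiveRoots_apply_coe ℂ hirr (e.symm ⟨ζC ^ k, hprimk⟩)
    rw [← he, Equiv.apply_symm_apply] at h
    exact h.symm
  have hσkx : σk x = (m : ℂ) := by rw [hxm, map_intCast]
  rw [hx, map_sum] at hσkx
  calc ∑ s ∈ T, f s ^ k = ∑ s ∈ T, σk (ζK ^ i s) := by
        refine Finset.sum_congr rfl fun s hs => ?_
        rw [map_pow, hσk, ← pow_mul, mul_comm, pow_mul, hi s hs]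
    _ = (m : ℂ) := hσkx

lemma sum_eq_int_of_invariant {n : ℕ} (hn : n ≠ 0) {ι : Type*} (T : Finset ι) (f : ι → ℂ)
    (hf : ∀ s ∈ T, f s ^ n = 1)
    (hstab : ∀ k : ℕ, k.Coprime n → ∑ s ∈ T, f s ^ k = ∑ s ∈ T, f s) :
    ∃ m : ℤ, ∑ s ∈ T, f s = (m : ℂ) := by
  haveI : NeZero n := ⟨hn⟩
  have hpos : 0 < n := Nat.pos_of_ne_zero hn
  set n' : ℕ+ := ⟨n, hpos⟩ with hn'
  haveI : NeZero (n' : ℕ) := ⟨n'.ne_zero⟩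
  set K := CyclotomicField n' ℚ with hK
  haveI : NeZero ((n' : ℕ) : ℚ) := ⟨by exact_mod_cast n'.ne_zero⟩
  haveI : IsCyclotomicExtension {(n' : ℕ)} ℚ K :=
    CyclotomicField.isCyclotomicExtension (n := (n' : ℕ)) (K := ℚ)
  have hζK : IsPrimitiveRoot (IsCyclotomicExtension.zeta n' ℚ K) (n' : ℕ) :=
    IsCyclotomicExtension.zeta_spec n' ℚ K
  set ζK := IsCyclotomicExtension.zeta n' ℚ K with hzK
  set ζC := Complex.exp (2 * Real.pi * Complex.I / n) with hzC
  have hζC : IsPrimitiveRoot ζC n := Complex.isPrimitiveRoot_exp n hn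
  have hirr : Irreducible (Polynomial.cyclotomic n' ℚ) := Polynomial.cyclotomic.irreducible_rat n'.pos
  set e := hζK.embeddingsEquivPrimitiveRoots ℂ hirr with he
  have hprim1 : ζC ∈ primitiveRoots (n' : ℕ) ℂ := (mem_primitiveRoots hpos).2 hζC
  set σ1 : K →ₐ[ℚ] ℂ := e.symm ⟨ζC, hprim1⟩ with hσ1def
  have hσ1 : σ1 ζK = ζC := by
    have h := hζK.embeddingsEquivPrimitiveRoots_apply_coe ℂ hirr (e.symm ⟨ζC, hprim1⟩)
    rw [← he, Equiv.apply_symm_apply] at h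
    exact h.symm
  have hinj : Function.Injective σ1 := σ1.toRingHom.injective
  have hex : ∀ s ∈ T, ∃ i : ℕ, ζC ^ i = f s := fun s hs => by
    obtain ⟨i, _, hi⟩ := hζC.eq_pow_of_pow_eq_one (hf s hs)
    exact ⟨i, hi⟩
  choose! i hi using hex
  set x : K := ∑ s ∈ T, ζK ^ i s with hx
  have hσ1x : σ1 x = ∑ s ∈ T, f s := by
    rw [hx, map_sum]
    exact Finset.sum_congr rfl fun s hs => by rw [map_pow, hσ1, hi s hs]
  -- x is Galois-fixed
  have hfix : ∀ σ : K ≃ₐ[ℚ] K, σ x = x := by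
    intro σ
    have hσζ : (σ ζK) ^ (n' : ℕ) = 1 := by
      rw [← map_pow, hζK.pow_eq_one, map_one]
    obtain ⟨j, _, hj⟩ := hζK.eq_pow_of_pow_eq_one hσζ
    have hjprim : IsPrimitiveRoot (ζK ^ j) (n' : ℕ) := hj ▸ hζK.map_of_injective σ.injective
    have hjcop : j.Coprime n := (hζK.pow_iff_coprime hpos j).1 hjprim
    apply hinj
    rw [hσ1x]
    calc σ1 (σ x) = ∑ s ∈ T, σ1 (σ (ζK ^ i s)) := by rw [hx, map_sum, map_sum]
      _ = ∑ s ∈ T, f s ^ j := by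
          refine Finset.sum_congr rfl fun s hs => ?_
          rw [map_pow, ← hj, ← pow_mul, mul_comm j (i s), pow_mul, map_pow, map_pow, hσ1,
            hi s hs]
      _ = ∑ s ∈ T, f s := hstab j hjcop
  -- hence x is rational
  haveI hFD : FiniteDimensional ℚ K := IsCyclotomicExtension.finiteDimensional {(n' : ℕ)} ℚ K
  haveI hGal : IsGalois ℚ K := IsCyclotomicExtension.isGalois {(n' : ℕ)} ℚ K
  have hbot : x ∈ (⊥ : IntermediateField ℚ K) := by
    rw [← IsGalois.fixedField_fixingSubgroup (⊥ : IntermediateField ℚ K)]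
    exact fun g => by
      change g.1 • x = x
      rw [AlgEquiv.smul_def]
      exact hfix g.1
  obtain ⟨q, hq⟩ := IntermediateField.mem_bot.1 hbot
  -- x is an algebraic integer
  have hint : IsIntegral ℤ x := by
    rw [hx]
    exact IsIntegral.sum _ fun s _ => (hζK.isIntegral hpos).pow _
  rw [← hq] at hint
  have hqint : IsIntegral ℤ q :=
    IsIntegral.tower_bot (algebraMap ℚ K).injective hint
  obtain ⟨m, hm⟩ := IsIntegrallyClosed.isIntegral_iff.1 hqint
  refine ⟨m, ?_⟩
  rw [← hσ1x, ← hq, ← hm]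
  rw [AlgHom.commutes]
  simp


lemma finset_eq_of_char_sums {T U : Finset Γ}
    (h : ∀ χ : AddChar Γ ℂ, ∑ t ∈ T, χ t = ∑ t ∈ U, χ t) : T = U := by
  set f : Γ → ℂ := fun t => (if t ∈ T then (1 : ℂ) else 0) - (if t ∈ U then (1 : ℂ) else 0)
    with hf
  set L : (Γ → ℂ) →ₗ[ℂ] ℂ :=
    { toFun := fun g => ∑ t, f t * g t
      map_add' := fun g₁ g₂ => by
        simp only [Pi.add_apply, mul_add]
        rw [Finset.sum_add_distrib]
      map_smul' := fun c g => by
        simp only [Pi.smul_apply, smul_eq_mul, RingHom.id_apply]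
        rw [Finset.mul_sum]
        exact Finset.sum_congr rfl fun t _ => by ring } with hLdef
  have hL : L = 0 := by
    apply (AddChar.complexBasis Γ).ext
    intro χ
    have hb : (AddChar.complexBasis Γ) χ = ⇑χ := AddChar.complexBasis_apply χ
    have hLχ : L ((AddChar.complexBasis Γ) χ) = ∑ t, f t * χ t := by rw [hb]; rfl
    rw [hLχ]
    have hzero : ∑ t, f t * χ t = 0 := by
      simp only [hf, sub_mul, ite_mul, one_mul, zero_mul]
      rw [Finset.sum_sub_distrib, Finset.sum_ite_mem, Finset.sum_ite_mem,
        Finset.univ_inter, Finset.univ_inter, h χ, sub_self]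
    rw [hzero]
    rfl
  ext t
  have h0 : L (Pi.single t 1) = 0 := by rw [hL]; rfl
  have h1 : f t = 0 := by
    have hs : L (Pi.single t 1) = f t := by
      have hrfl : L (Pi.single t 1) = ∑ x, f x * (Pi.single t 1 : Γ → ℂ) x := rfl
      rw [hrfl]
      simp [Pi.single_apply, mul_ite, mul_one, mul_zero, Finset.sum_ite_eq']
    rw [← hs, h0]
  by_cases h2 : t ∈ T <;> by_cases h3 : t ∈ U <;>
    simp only [hf, h2, h3, if_true, if_false, sub_zero, zero_sub, sub_self] at h1 <;>
    first
      | (exact iff_of_true h2 h3)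
      | (exact iff_of_false h2 h3)
      | (exact absurd h1 one_ne_zero)
      | (exact absurd (neg_eq_zero.1 h1) one_ne_zero)

end AP

open AP in
open scoped Classical in
theorem cayley_integral_iff_mem_B {Γ : Type*} [AddCommGroup Γ] [Fintype Γ]
    (S : Set Γ) (hsym : -S = S) :
    (∀ μ ∈ spectrum ℂ (Matrix.of fun a b : Γ => if a - b ∈ S then (1 : ℂ) else 0),
      ∃ k : ℤ, μ = (k : ℂ)) ↔ InB Γ S := by
  have hspec := spectrum_eq S hsym
  set n := AddMonoid.exponent Γ with hn
  have hn0 : n ≠ 0 := AddMonoid.exponent_ne_zero_of_finite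
  have hroot : ∀ (χ : AddChar Γ ℂ) (s : Γ), χ s ^ n = 1 := fun χ s => by
    rw [← AddChar.map_nsmul_eq_pow, hn, AddMonoid.exponent_nsmul_eq_zero,
      AddChar.map_zero_eq_one]
  constructor
  · intro h
    refine AtomClosed.inB (atomClosed_of_smul_stable ?_)
    intro k hk a ha
    have hinj : Function.Injective (fun a : Γ => k • a) := nsmul_injective hk
    have key : ∀ χ : AddChar Γ ℂ, ∑ s ∈ S.toFinset, χ (k • s) = ∑ s ∈ S.toFinset, χ s := by
      intro χ
      obtain ⟨m, hm⟩ := h _ (hspec ▸ Set.mem_range_self χ)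
      have hsum : ∑ s ∈ S.toFinset, χ s = (m : ℂ) := hm
      have hpow := sum_pow_eq_of_sum_eq_int hn0 S.toFinset (fun s => χ s)
        (fun s _ => hroot χ s) hsum hk
      calc ∑ s ∈ S.toFinset, χ (k • s) = ∑ s ∈ S.toFinset, χ s ^ k := by
            exact Finset.sum_congr rfl fun s _ => AddChar.map_nsmul_eq_pow χ k s
        _ = (m : ℂ) := hpow
        _ = ∑ s ∈ S.toFinset, χ s := hsum.symm
    have hTU : S.toFinset.image (fun s => k • s) = S.toFinset := by
      apply finset_eq_of_char_sums
      intro χ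
      rw [Finset.sum_image (fun x _ y _ hxy => hinj hxy)]
      exact key χ
    have hmem : k • a ∈ S.toFinset.image (fun s => k • s) :=
      Finset.mem_image_of_mem _ (Set.mem_toFinset.2 ha)
    rw [hTU] at hmem
    exact Set.mem_toFinset.1 hmem
  · intro hB μ hμ
    rw [hspec] at hμ
    obtain ⟨χ, rfl⟩ := hμ
    have hac := atomClosed_of_inB hB
    apply sum_eq_int_of_invariant hn0 S.toFinset (fun s => χ s) (fun s _ => hroot χ s)
    intro k hk
    have hinj : Function.Injective (fun a : Γ => k • a) := nsmul_injective hk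
    have himg : S.toFinset.image (fun s => k • s) = S.toFinset := by
      apply Finset.eq_of_subset_of_card_le
      · intro t ht
        obtain ⟨s, hs, rfl⟩ := Finset.mem_image.1 ht
        exact Set.mem_toFinset.2
          (hac (Set.mem_toFinset.1 hs) (atom_of_coprime_smul hk s))
      · rw [Finset.card_image_of_injective _ hinj]
    calc ∑ s ∈ S.toFinset, χ s ^ k
        = ∑ s ∈ S.toFinset, χ (k • s) := by
          exact Finset.sum_congr rfl fun s _ => (AddChar.map_nsmul_eq_pow χ k s).symm
      _ = ∑ t ∈ S.toFinset.image (fun s => k • s), χ t :=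
          (Finset.sum_image (fun x _ y _ hxy => hinj hxy)).symm
      _ = ∑ s ∈ S.toFinset, χ s := by rw [himg]
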